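/- Let (G_j) be a sequence of finite loopless graphs with e(G_j) → ∞ satisfying (d²̄(G_j)/d̄(G_j)²)·√(ρ(G_j)) → 0 as j → ∞ (this holds, in particular, if the maximal degree of G_j is o(√(e(G_j)))). Fix r > 0 and set p_j = r/√(2e(G_j)). Let N_j be the number of vertices of degree at least 2 in the p_j-sampled subgraph S_{p_j}(G_j). Then E[N_j] ≤ r³·(d²̄(G_j)/d̄(G_j)²)·√(ρ(G_j)) → 0, and hence N_j → 0 in probability; i.e., with probability tending to 1, every vertex of S_{p_j}(G_j) has degree at most 1. -/

import Mathlib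

open Filter Finset
open scoped Classical ENNReal

/-- A finite graph on vertex set `Fin n`, possibly with loops, without multiple edges. -/
structure FinGraph where
  n : ℕ
  adj : Fin n → Fin n → Bool
  symm : ∀ i j, adj i j = adj j i

namespace FinGraph

/-- Number of vertices. -/
def v (G : FinGraph) : ℕ := G.n

/-- Number of non-loop edges. -/
def e (G : FinGraph) : ℕ :=
  ((univ : Finset (Fin G.n × Fin G.n)).filter
    (fun q => G.adj q.1 q.2 = true ∧ q.1 < q.2)).card

/-- Number of loops. -/
def loops (G : FinGraph) : ℕ :=
  ((univ : Finset (Fin G.n)).filter (fun i => G.adj i i = true)).card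

/-- Degree of a vertex (number of neighbours via non-loop edges). -/
def deg (G : FinGraph) (i : Fin G.n) : ℕ :=
  ((univ : Finset (Fin G.n)).filter (fun j => G.adj i j = true ∧ j ≠ i)).card

/-- A graph is loopless when no vertex is adjacent to itself. -/
def Loopless (G : FinGraph) : Prop := ∀ i, G.adj i i = false

/-- The induced subgraph on a set `S` of vertices. -/
def induce (G : FinGraph) (S : Finset (Fin G.n)) : FinGraph where
  n := S.card
  adj i j := G.adj (S.orderIsoOfFin rfl i).1 (S.orderIsoOfFin rfl j).1
  symm i j := G.symm _ _

/-- The graph obtained by discarding all isolated vertices (vertices in no edge,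
loop or non-loop). -/
def core (G : FinGraph) : FinGraph :=
  G.induce ((univ : Finset (Fin G.n)).filter (fun i => ∃ j, G.adj i j = true))

/-- Graph isomorphism. -/
def Iso (G H : FinGraph) : Prop :=
  ∃ eqv : Fin G.n ≃ Fin H.n, ∀ i j, G.adj i j = H.adj (eqv i) (eqv j)

/-- Average degree `d̄(G)`. -/
noncomputable def avgDeg (G : FinGraph) : ℝ :=
  (1 / (G.n : ℝ)) * ∑ i : Fin G.n, (G.deg i : ℝ)

/-- Square average degree `d²̄(G)`. -/
noncomputable def sqAvgDeg (G : FinGraph) : ℝ :=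
  (1 / (G.n : ℝ)) * ∑ i : Fin G.n, (G.deg i : ℝ) ^ 2

/-- Edge density `ρ(G) = 2e(G)/v(G)²`. -/
noncomputable def density (G : FinGraph) : ℝ :=
  2 * (G.e : ℝ) / (G.n : ℝ) ^ 2

end FinGraph

/-- Unlabeled finite graphs: isomorphism classes of finite graphs. -/
def UGraph := Quot FinGraph.Iso

/-- The isomorphism class of a finite graph. -/
def FinGraph.cls (G : FinGraph) : UGraph := Quot.mk _ G

/-- Probability that independent Bernoulli(min p 1) vertex selection picks exactly `S`. -/
noncomputable def sampleWeight (G : FinGraph) (p : ℝ) (S : Finset (Fin G.n)) : ℝ :=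
  (min p 1) ^ S.card * (1 - min p 1) ^ (G.n - S.card)

/-- Law (pmf) of the `p`-sampling `S_p(G)`: keep each vertex independently with
probability `min p 1`, take the induced subgraph, discard isolated vertices,
and pass to the isomorphism class. -/
noncomputable def pSampleLaw (G : FinGraph) (p : ℝ) : UGraph → ℝ := fun H =>
  ∑ S ∈ (univ : Finset (Fin G.n)).powerset,
    sampleWeight G p S * (if ((G.induce S).core).cls = H then 1 else 0)

/-- The graph on `Fin k` pulled back along a vertex sample `x`. -/
def seqGraph (G : FinGraph) (k : ℕ) (x : Fin k → Fin G.n) : FinGraph where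
  n := k
  adj i j := G.adj (x i) (x j)
  symm i j := G.symm _ _

/-- Law (pmf) of the with-replacement `p`-sampling `S̃_p(G)`: draw `K ~ Poisson(p·v(G))`
vertices uniformly with replacement, form the graph on `Fin K` in which `i, j` are joined
whenever `(x_i, x_j)` is an edge of `G`, discard isolated vertices, and pass to the
isomorphism class. -/
noncomputable def wrSampleLaw (G : FinGraph) (p : ℝ) : UGraph → ℝ := fun H =>
  ∑' k : ℕ,
    (Real.exp (-(p * (G.v : ℝ))) * (p * (G.v : ℝ)) ^ k / (Nat.factorial k : ℝ)) *
      ((((univ : Finset (Fin k → Fin G.n)).filter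
          (fun x => ((seqGraph G k x).core).cls = H)).card : ℝ) / ((G.v : ℝ)) ^ k)

/-- Total variation distance `sup_A |P(A) − Q(A)|` between two pmf-style laws on a
countable discrete space. -/
noncomputable def dTV {α : Type*} (f g : α → ℝ) : ℝ :=
  ⨆ A : Set α, |∑' x : A, (f x.1 - g x.1)|

/-- `∑_i d_i · 1[d_i > k·√(e(G))]`, the total degree of vertices of degree exceeding
`k·√(e(G))`. -/
noncomputable def tailDegSum (G : FinGraph) (k : ℝ) : ℝ :=
  ∑ i : Fin G.n,
    (if k * Real.sqrt (G.e : ℝ) < (G.deg i : ℝ) then (G.deg i : ℝ) else 0)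

/-- A sequence of graphs is uniformly sampling regular. -/
def UniformlySamplingRegular (G : ℕ → FinGraph) : Prop :=
  ∀ ε : ℝ, 0 < ε → ∃ k : ℝ, 0 < k ∧ ∀ j,
    (1 / ((G j).e : ℝ)) * tailDegSum (G j) k < ε

/-- `E[e(S_p(G)) · 1[e(S_p(G)) > M]]`, the tail expectation of the number of non-loop
edges of the `p`-sampled subgraph (discarding isolated vertices does not change it). -/
noncomputable def expEdgeTail (G : FinGraph) (p M : ℝ) : ℝ :=
  ∑ S ∈ (univ : Finset (Fin G.n)).powerset,
    sampleWeight G p S *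
      (if M < ((G.induce S).e : ℝ) then ((G.induce S).e : ℝ) else 0)

/-- `E[e(S_p(G))]`, the expected number of non-loop edges of the `p`-sampled subgraph. -/
noncomputable def expEdge (G : FinGraph) (p : ℝ) : ℝ :=
  ∑ S ∈ (univ : Finset (Fin G.n)).powerset,
    sampleWeight G p S * ((G.induce S).e : ℝ)

/-- Law (pmf on ℕ) of the number of non-loop edges of the `p`-sampled subgraph. -/
noncomputable def edgeLaw (G : FinGraph) (p : ℝ) (m : ℕ) : ℝ :=
  ∑ S ∈ (univ : Finset (Fin G.n)).powerset,
    sampleWeight G p S * (if (G.induce S).e = m then 1 else 0)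

/-- Number of kept neighbours (via non-loop edges) of vertex `i` under the selection `S`. -/
def keptNbrCount (G : FinGraph) (S : Finset (Fin G.n)) (i : Fin G.n) : ℕ :=
  ((univ : Finset (Fin G.n)).filter (fun j => G.adj i j = true ∧ j ≠ i ∧ j ∈ S)).card

/-- `Pr(D_i ≥ 2)`: the probability that vertex `i` is kept and has at least two kept
neighbours, under independent Bernoulli(min p 1) vertex selection. -/
noncomputable def probD2 (G : FinGraph) (p : ℝ) (i : Fin G.n) : ℝ :=
  ∑ S ∈ (univ : Finset (Fin G.n)).powerset,
    sampleWeight G p S * (if i ∈ S ∧ 2 ≤ keptNbrCount G S i then 1 else 0)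

/-- Probability that some kept vertex has at least two kept neighbours. -/
noncomputable def probSomeD2 (G : FinGraph) (p : ℝ) : ℝ :=
  ∑ S ∈ (univ : Finset (Fin G.n)).powerset,
    sampleWeight G p S * (if ∃ i ∈ S, 2 ≤ keptNbrCount G S i then 1 else 0)

/-- Number of isolated kept (non-loop) edges: both endpoints kept, and each endpoint has
exactly one kept neighbour. -/
def isoEdgeCount (G : FinGraph) (S : Finset (Fin G.n)) : ℕ :=
  ((univ : Finset (Fin G.n × Fin G.n)).filter (fun q =>
    G.adj q.1 q.2 = true ∧ q.1 < q.2 ∧ q.1 ∈ S ∧ q.2 ∈ S ∧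
    keptNbrCount G S q.1 = 1 ∧ keptNbrCount G S q.2 = 1)).card

/- ### Auxiliary lemmas -/

lemma sum_weight_subset (n : ℕ) (q : ℝ) (T : Finset (Fin n)) :
    ∑ S ∈ (univ : Finset (Fin n)).powerset,
      q ^ S.card * (1 - q) ^ (n - S.card) * (if T ⊆ S then (1:ℝ) else 0)
      = q ^ T.card := by
  have hcongr : ∀ S ∈ (univ : Finset (Fin n)).powerset,
      q ^ S.card * (1 - q) ^ (n - S.card) * (if T ⊆ S then (1:ℝ) else 0)
      = (∏ _i ∈ S, q) * ∏ i ∈ (univ : Finset (Fin n)) \ S,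
          (if i ∈ T then 0 else (1 - q)) := by
    intro S hS
    rw [Finset.mem_powerset] at hS
    by_cases h : T ⊆ S
    · have hdisj : ∀ i ∈ (univ : Finset (Fin n)) \ S, i ∉ T := by
        intro i hi hiT
        exact (Finset.mem_sdiff.mp hi).2 (h hiT)
      rw [if_pos h, Finset.prod_const,
        Finset.prod_congr rfl (fun i hi => if_neg (hdisj i hi)),
        Finset.prod_const, Finset.card_sdiff_of_subset hS, Finset.card_univ, Fintype.card_fin]
      ring
    · rw [if_neg h]
      obtain ⟨t, htT, htS⟩ := Finset.not_subset.mp h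
      have hz : ∏ i ∈ (univ : Finset (Fin n)) \ S, (if i ∈ T then (0:ℝ) else (1 - q)) = 0 :=
        Finset.prod_eq_zero (Finset.mem_sdiff.mpr ⟨Finset.mem_univ t, htS⟩) (if_pos htT)
      rw [hz]
      ring
  rw [Finset.sum_congr rfl hcongr, ← Finset.prod_add]
  have hfac : ∀ i ∈ (univ : Finset (Fin n)),
      (q + if i ∈ T then 0 else (1 - q)) = (if i ∈ T then q else 1) := by
    intro i _; split_ifs <;> ring
  rw [Finset.prod_congr rfl hfac,
    ← Finset.prod_subset (Finset.subset_univ T) (fun x _ hx => if_neg hx)]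
  rw [Finset.prod_congr rfl (fun i hi => if_pos hi), Finset.prod_const]

lemma sampleWeight_nonneg (G : FinGraph) (p : ℝ) (hp : 0 ≤ p)
    (S : Finset (Fin G.n)) : 0 ≤ sampleWeight G p S := by
  have hq0 : 0 ≤ min p 1 := le_min hp zero_le_one
  have hq1 : min p 1 ≤ 1 := min_le_right _ _
  exact mul_nonneg (pow_nonneg hq0 _) (pow_nonneg (by linarith) _)

lemma probD2_nonneg (G : FinGraph) (p : ℝ) (hp : 0 ≤ p) (i : Fin G.n) :
    0 ≤ probD2 G p i := by
  refine Finset.sum_nonneg fun S _ => mul_nonneg (sampleWeight_nonneg G p hp S) ?_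
  split_ifs <;> norm_num

lemma probSomeD2_nonneg (G : FinGraph) (p : ℝ) (hp : 0 ≤ p) :
    0 ≤ probSomeD2 G p := by
  refine Finset.sum_nonneg fun S _ => mul_nonneg (sampleWeight_nonneg G p hp S) ?_
  split_ifs <;> norm_num

lemma probD2_le (G : FinGraph) (p : ℝ) (hp : 0 ≤ p) (i : Fin G.n) :
    probD2 G p i ≤ (min p 1) ^ 3 * (G.deg i : ℝ) ^ 2 := by
  classical
  set q := min p 1 with hqdef
  have hq0 : 0 ≤ q := le_min hp zero_le_one
  set N : Finset (Fin G.n) :=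
    (univ : Finset (Fin G.n)).filter (fun j => G.adj i j = true ∧ j ≠ i) with hN
  set P : Finset (Fin G.n × Fin G.n) :=
    (N ×ˢ N).filter (fun z => z.1 ≠ z.2) with hP
  have step1 : probD2 G p i ≤
      ∑ S ∈ (univ : Finset (Fin G.n)).powerset, sampleWeight G p S *
        ∑ z ∈ P, (if insert i {z.1, z.2} ⊆ S then (1:ℝ) else 0) := by
    refine Finset.sum_le_sum fun S _ => ?_
    refine mul_le_mul_of_nonneg_left ?_ (sampleWeight_nonneg G p hp S)
    by_cases h : i ∈ S ∧ 2 ≤ keptNbrCount G S i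
    · rw [if_pos h]
      obtain ⟨hiS, hcnt⟩ := h
      have h1 : 1 < ((univ : Finset (Fin G.n)).filter
          (fun j => G.adj i j = true ∧ j ≠ i ∧ j ∈ S)).card := hcnt
      obtain ⟨a, ha, b, hb, hab⟩ := Finset.one_lt_card.mp h1
      simp only [Finset.mem_filter, Finset.mem_univ, true_and] at ha hb
      have hmem : (a, b) ∈ P := by
        simp only [hP, Finset.mem_filter, Finset.mem_product, hN, Finset.mem_filter,
          Finset.mem_univ, true_and]
        exact ⟨⟨⟨ha.1, ha.2.1⟩, ⟨hb.1, hb.2.1⟩⟩, hab⟩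
      have hsub : insert i ({a, b} : Finset (Fin G.n)) ⊆ S := by
        rw [Finset.insert_subset_iff, Finset.insert_subset_iff,
          Finset.singleton_subset_iff]
        exact ⟨hiS, ha.2.2, hb.2.2⟩
      have := Finset.single_le_sum
        (f := fun z : Fin G.n × Fin G.n =>
          (if insert i {z.1, z.2} ⊆ S then (1:ℝ) else 0))
        (fun z _ => by split_ifs <;> norm_num) hmem
      simpa [hsub] using this
    · rw [if_neg h]
      exact Finset.sum_nonneg fun z _ => by split_ifs <;> norm_num
  have step2 : ∑ S ∈ (univ : Finset (Fin G.n)).powerset, sampleWeight G p S *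
        ∑ z ∈ P, (if insert i {z.1, z.2} ⊆ S then (1:ℝ) else 0)
      = ∑ z ∈ P, q ^ (insert i ({z.1, z.2} : Finset (Fin G.n))).card := by
    simp_rw [Finset.mul_sum]
    rw [Finset.sum_comm]
    refine Finset.sum_congr rfl fun z _ => ?_
    exact sum_weight_subset G.n q _
  have step3 : ∀ z ∈ P, q ^ (insert i ({z.1, z.2} : Finset (Fin G.n))).card = q ^ 3 := by
    intro z hz
    simp only [hP, Finset.mem_filter, Finset.mem_product, hN, Finset.mem_filter,
      Finset.mem_univ, true_and] at hz
    have h1 : z.1 ≠ z.2 := hz.2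
    have h2 : i ∉ ({z.1, z.2} : Finset (Fin G.n)) := by
      simp only [Finset.mem_insert, Finset.mem_singleton, not_or]
      exact ⟨fun h => hz.1.1.2 h.symm, fun h => hz.1.2.2 h.symm⟩
    rw [Finset.card_insert_of_notMem h2, Finset.card_pair h1]
  have hPcard : (P.card : ℝ) ≤ (G.deg i : ℝ) ^ 2 := by
    have h1 : P.card ≤ (N ×ˢ N).card := Finset.card_filter_le _ _
    have h2 : (N ×ˢ N).card = G.deg i * G.deg i := by
      rw [Finset.card_product]; rfl
    have : P.card ≤ G.deg i * G.deg i := h2 ▸ h1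
    calc (P.card : ℝ) ≤ ((G.deg i * G.deg i : ℕ) : ℝ) := by exact_mod_cast this
      _ = (G.deg i : ℝ) ^ 2 := by push_cast; ring
  calc probD2 G p i ≤ _ := step1
    _ = ∑ z ∈ P, q ^ (insert i ({z.1, z.2} : Finset (Fin G.n))).card := step2
    _ = ∑ _z ∈ P, q ^ 3 := Finset.sum_congr rfl step3
    _ = (P.card : ℝ) * q ^ 3 := by rw [Finset.sum_const, nsmul_eq_mul]
    _ ≤ (G.deg i : ℝ) ^ 2 * q ^ 3 :=
        mul_le_mul_of_nonneg_right hPcard (pow_nonneg hq0 _)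
    _ = q ^ 3 * (G.deg i : ℝ) ^ 2 := by ring

lemma handshake (G : FinGraph) : ∑ i : Fin G.n, G.deg i = 2 * G.e := by
  classical
  unfold FinGraph.deg FinGraph.e
  simp only [Finset.card_filter]
  rw [Fintype.sum_prod_type]
  have split : ∀ i j : Fin G.n,
      (if G.adj i j = true ∧ j ≠ i then (1:ℕ) else 0)
      = (if G.adj i j = true ∧ i < j then (1:ℕ) else 0)
        + (if G.adj i j = true ∧ j < i then (1:ℕ) else 0) := by
    intro i j
    by_cases ha : G.adj i j = true
    · simp only [ha, true_and]
      rcases lt_trichotomy i j with h | h | h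
      · rw [if_pos h.ne', if_pos h, if_neg (asymm h)]
      · subst h; simp
      · rw [if_pos h.ne, if_neg (asymm h), if_pos h]
    · simp [ha]
  simp only [split, Finset.sum_add_distrib]
  have swap : ∑ i : Fin G.n, ∑ j : Fin G.n,
      (if G.adj i j = true ∧ j < i then (1:ℕ) else 0)
      = ∑ i : Fin G.n, ∑ j : Fin G.n,
      (if G.adj i j = true ∧ i < j then (1:ℕ) else 0) := by
    rw [Finset.sum_comm]
    refine Finset.sum_congr rfl fun i _ => Finset.sum_congr rfl fun j _ => ?_
    rw [G.symm]
  rw [swap]; ring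

lemma n_pos_of_e_pos (G : FinGraph) (h : 0 < G.e) : 0 < G.n := by
  obtain ⟨z, _⟩ := Finset.card_pos.mp h
  exact Nat.lt_of_le_of_lt (Nat.zero_le _) z.1.isLt

lemma main_ineq (G : FinGraph) (r : ℝ) (hr : 0 < r) :
    (∑ i : Fin G.n, probD2 G (r / Real.sqrt (2 * (G.e : ℝ))) i) ≤
      r ^ 3 * ((G.sqAvgDeg / G.avgDeg ^ 2) * Real.sqrt G.density) := by
  set p := r / Real.sqrt (2 * (G.e : ℝ)) with hpdef
  have hp : 0 ≤ p := div_nonneg hr.le (Real.sqrt_nonneg _)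
  set q := min p 1 with hqdef
  have hq0 : 0 ≤ q := le_min hp zero_le_one
  set Q := ∑ i : Fin G.n, (G.deg i : ℝ) ^ 2 with hQdef
  have hQ0 : 0 ≤ Q := Finset.sum_nonneg fun i _ => sq_nonneg _
  have hbound : (∑ i : Fin G.n, probD2 G p i) ≤ q ^ 3 * Q := by
    calc ∑ i : Fin G.n, probD2 G p i
        ≤ ∑ i : Fin G.n, q ^ 3 * (G.deg i : ℝ) ^ 2 :=
          Finset.sum_le_sum fun i _ => probD2_le G p hp i
      _ = q ^ 3 * Q := by rw [← Finset.mul_sum]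
  rcases Nat.eq_zero_or_pos G.e with he | he
  · have hdeg : ∀ i : Fin G.n, G.deg i = 0 := by
      intro i
      have hsum : ∑ i : Fin G.n, G.deg i = 0 := by rw [handshake, he, mul_zero]
      exact (Finset.sum_eq_zero_iff.mp hsum) i (Finset.mem_univ i)
    have hQz : Q = 0 := by
      rw [hQdef]
      exact Finset.sum_eq_zero fun i _ => by rw [hdeg i]; norm_num
    have hsq : G.sqAvgDeg = 0 := by
      unfold FinGraph.sqAvgDeg
      rw [Finset.sum_eq_zero fun i _ => by rw [hdeg i]; norm_num, mul_zero]
    rw [hsq, zero_div, zero_mul, mul_zero]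
    calc (∑ i : Fin G.n, probD2 G p i) ≤ q ^ 3 * Q := hbound
      _ = 0 := by rw [hQz, mul_zero]
  · have hn : 0 < G.n := n_pos_of_e_pos G he
    have hnn : (0:ℝ) < (G.n : ℝ) := by exact_mod_cast hn
    have hE : (0:ℝ) < 2 * (G.e : ℝ) := by positivity
    set s := Real.sqrt (2 * (G.e : ℝ)) with hsdef
    have hs : 0 < s := Real.sqrt_pos.mpr hE
    have hs2 : s ^ 2 = 2 * (G.e : ℝ) := Real.sq_sqrt hE.le
    have hsumdeg : ∑ i : Fin G.n, (G.deg i : ℝ) = 2 * (G.e : ℝ) := by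
      exact_mod_cast handshake G
    have havg : G.avgDeg = (2 * (G.e : ℝ)) / (G.n : ℝ) := by
      unfold FinGraph.avgDeg
      rw [hsumdeg]; ring
    have hsq : G.sqAvgDeg = Q / (G.n : ℝ) := by
      unfold FinGraph.sqAvgDeg
      rw [← hQdef]; ring
    have hdens : Real.sqrt G.density = s / (G.n : ℝ) := by
      unfold FinGraph.density
      rw [Real.sqrt_div hE.le, Real.sqrt_sq hnn.le]
    have hrhs : r ^ 3 * ((G.sqAvgDeg / G.avgDeg ^ 2) * Real.sqrt G.density)
        = r ^ 3 * Q / s ^ 3 := by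
      rw [hsq, havg, hdens, ← hs2]
      field_simp
    rw [hrhs]
    have hqle : q ≤ r / s := min_le_left _ _
    have hq3 : q ^ 3 ≤ (r / s) ^ 3 := pow_le_pow_left₀ hq0 hqle 3
    calc (∑ i : Fin G.n, probD2 G p i) ≤ q ^ 3 * Q := hbound
      _ ≤ (r / s) ^ 3 * Q := mul_le_mul_of_nonneg_right hq3 hQ0
      _ = r ^ 3 * Q / s ^ 3 := by field_simp

lemma probSomeD2_le_sum (G : FinGraph) (p : ℝ) (hp : 0 ≤ p) :
    probSomeD2 G p ≤ ∑ i : Fin G.n, probD2 G p i := by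
  classical
  have hswap : ∑ i : Fin G.n, probD2 G p i
      = ∑ S ∈ (univ : Finset (Fin G.n)).powerset, sampleWeight G p S *
          ∑ i : Fin G.n, (if i ∈ S ∧ 2 ≤ keptNbrCount G S i then (1:ℝ) else 0) := by
    unfold probD2
    rw [Finset.sum_comm]
    exact Finset.sum_congr rfl fun S _ => by rw [Finset.mul_sum]
  rw [hswap]
  unfold probSomeD2
  refine Finset.sum_le_sum fun S _ => ?_
  refine mul_le_mul_of_nonneg_left ?_ (sampleWeight_nonneg G p hp S)
  by_cases h : ∃ i ∈ S, 2 ≤ keptNbrCount G S i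
  · rw [if_pos h]
    obtain ⟨i, hiS, hcnt⟩ := h
    have := Finset.single_le_sum
      (f := fun i : Fin G.n => (if i ∈ S ∧ 2 ≤ keptNbrCount G S i then (1:ℝ) else 0))
      (fun i _ => by split_ifs <;> norm_num) (Finset.mem_univ i)
    simpa [hiS, hcnt] using this
  · rw [if_neg h]
    exact Finset.sum_nonneg fun i _ => by split_ifs <;> norm_num

/-- For loopless graphs with `e(G_j) → ∞` and
`(d²̄(G_j)/d̄(G_j)²)·√(ρ(G_j)) → 0`, with `p_j = r/√(2e(G_j))`, the expected number `N_j`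
of vertices of degree at least `2` in the `p_j`-sampled subgraph satisfies
`E[N_j] ≤ r³·(d²̄(G_j)/d̄(G_j)²)·√(ρ(G_j)) → 0`, hence `N_j → 0` in probability, i.e.,
with probability tending to one every vertex of the sampled subgraph has degree at most
one. -/
theorem stmt11 (G : ℕ → FinGraph) (hloop : ∀ j, (G j).Loopless)
    (he : Tendsto (fun j => ((G j).e : ℝ)) atTop atTop)
    (hratio : Tendsto
      (fun j => ((G j).sqAvgDeg / (G j).avgDeg ^ 2) * Real.sqrt ((G j).density))
      atTop (nhds 0))
    (r : ℝ) (hr : 0 < r) :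
    (∀ j, (∑ i : Fin (G j).n, probD2 (G j) (r / Real.sqrt (2 * ((G j).e : ℝ))) i) ≤
        r ^ 3 * (((G j).sqAvgDeg / (G j).avgDeg ^ 2) * Real.sqrt ((G j).density))) ∧
    Tendsto
        (fun j => ∑ i : Fin (G j).n, probD2 (G j) (r / Real.sqrt (2 * ((G j).e : ℝ))) i)
        atTop (nhds 0) ∧
    Tendsto (fun j => probSomeD2 (G j) (r / Real.sqrt (2 * ((G j).e : ℝ))))
        atTop (nhds 0) := by
  have hp : ∀ j, 0 ≤ r / Real.sqrt (2 * ((G j).e : ℝ)) :=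
    fun j => div_nonneg hr.le (Real.sqrt_nonneg _)
  have h1 : ∀ j, (∑ i : Fin (G j).n, probD2 (G j) (r / Real.sqrt (2 * ((G j).e : ℝ))) i) ≤
      r ^ 3 * (((G j).sqAvgDeg / (G j).avgDeg ^ 2) * Real.sqrt ((G j).density)) :=
    fun j => main_ineq (G j) r hr
  have hg : Tendsto (fun j =>
      r ^ 3 * (((G j).sqAvgDeg / (G j).avgDeg ^ 2) * Real.sqrt ((G j).density)))
      atTop (nhds 0) := by
    have := hratio.const_mul (r ^ 3)
    simpa using this
  have h2 : Tendsto
      (fun j => ∑ i : Fin (G j).n, probD2 (G j) (r / Real.sqrt (2 * ((G j).e : ℝ))) i)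
      atTop (nhds 0) :=
    squeeze_zero (fun j => Finset.sum_nonneg fun i _ => probD2_nonneg _ _ (hp j) i)
      h1 hg
  refine ⟨h1, h2, ?_⟩
  exact squeeze_zero (fun j => probSomeD2_nonneg _ _ (hp j))
    (fun j => le_trans (probSomeD2_le_sum _ _ (hp j)) (h1 j)) hg
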